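/- Let n ≥ 3 and let i be an integer with 1 ≤ i ≤ n−2. Then the number of permutations p of {1,…,n} such that the entry p_i is a leaf of the min1–min2 tree of p is exactly n!/3. -/

import Mathlib

/-- Binary trees with natural-number labels, used to model minmax trees of
permutations. -/
inductive BTree where
  | nil : BTree
  | node : ℕ → BTree → BTree → BTree
deriving DecidableEq, Repr

namespace BTree

/-- The label of the root (if any). -/
def rootVal : BTree → Option ℕ
  | .nil => none
  | .node v _ _ => some v

/-- Whether the value `x` occurs as a label in the tree. -/
def memB : BTree → ℕ → Bool
  | .nil, _ => false
  | .node v l r, x => (x == v) || memB l x || memB r x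

/-- The number of children of the (unique, for permutations) node labelled `x`. -/
def numChildren : BTree → ℕ → ℕ
  | .nil, _ => 0
  | .node v l r, x =>
      if x = v then (if l = .nil then 0 else 1) + (if r = .nil then 0 else 1)
      else numChildren l x + numChildren r x

/-- `x` is a leaf of the tree: it occurs in the tree and has no children. -/
def IsLeaf (t : BTree) (x : ℕ) : Prop := t.memB x = true ∧ t.numChildren x = 0

instance (t : BTree) (x : ℕ) : Decidable (t.IsLeaf x) := by unfold IsLeaf; infer_instance

/-- `childB t x y = true` iff `x` is a child of `y` in `t`, i.e. `x` is the root of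
the left or the right subtree hanging from `y`. -/
def childB : BTree → ℕ → ℕ → Bool
  | .nil, _, _ => false
  | .node v l r, x, y =>
      ((y == v) && (l.rootVal == some x || r.rootVal == some x))
      || childB l x y || childB r x y

/-- `ancB t x y = true` iff `x` is a (strict) ancestor of `y` in `t`, i.e. `y` lies
in a subtree hanging from `x`. -/
def ancB : BTree → ℕ → ℕ → Bool
  | .nil, _, _ => false
  | .node v l r, x, y =>
      ((x == v) && (memB l y || memB r y)) || ancB l x y || ancB r x y

end BTree

/-- `x` is the leftmost-eligible extreme letter of `l`: the minimum or the maximum. -/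
def isExtreme (l : List ℕ) (x : ℕ) : Bool :=
  (l.min? == some x) || (l.max? == some x)

/-- Fuelled construction of the minmax tree of a list of distinct naturals:
split the list as `u ++ [m] ++ v` where `m` is the leftmost of the minimum and
maximum letters, put `m` at the root and recurse on `u` (left) and `v` (right). -/
def mmAux : ℕ → List ℕ → BTree
  | 0, _ => .nil
  | fuel+1, l =>
    if l.isEmpty then .nil
    else
      let k := l.findIdx (isExtreme l)
      .node (l.getD k 0) (mmAux fuel (l.take k)) (mmAux fuel (l.drop (k+1)))

/-- The minmax tree `T^m_p` of a word `l` (with distinct letters). -/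
def minmaxTree (l : List ℕ) : BTree := mmAux l.length l

/-- The word `p_1 p_2 … p_n` on the letters `{1,…,n}` associated to a permutation
`p` of `Fin n`. -/
def permList (n : ℕ) (p : Equiv.Perm (Fin n)) : List ℕ :=
  List.ofFn (fun i => (p i : ℕ) + 1)

/-- The `i`-th entry `p_i` (1-indexed) of the permutation `p`. -/
def entryAt (n : ℕ) (p : Equiv.Perm (Fin n)) (i : ℕ) : ℕ :=
  (permList n p).getD (i - 1) 0

/-- `x` is the minimum or the second-minimum letter of `l` (for a one-letter word,
its unique letter qualifies). -/
def isMin12 (l : List ℕ) (x : ℕ) : Bool :=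
  (l.min? == some x) || ((l.erase (l.min?.getD 0)).min? == some x)

/-- Fuelled construction of the min1–min2 tree: split the list as `u ++ [m] ++ v`
where `m` is the leftmost of the minimum and second-minimum letters, put `m` at the
root and recurse on `u` (left) and `v` (right). -/
def mm12Aux : ℕ → List ℕ → BTree
  | 0, _ => .nil
  | fuel+1, l =>
    if l.isEmpty then .nil
    else
      let k := l.findIdx (isMin12 l)
      .node (l.getD k 0) (mm12Aux fuel (l.take k)) (mm12Aux fuel (l.drop (k+1)))

/-- The min1–min2 tree of a word `l` (with distinct letters). -/
def min12Tree (l : List ℕ) : BTree := mm12Aux l.length l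


namespace Min12Proof

open List BTree

/-! ### Basic facts about `isMin12` -/

theorem isMin12_min (l : List ℕ) {m : ℕ} (hm : l.min? = some m) : isMin12 l m = true := by
  simp [isMin12, hm]

theorem two_le_length_of_two_mem {d : List ℕ} (hd : d.Nodup) {x y : ℕ} (hx : x ∈ d)
    (hy : y ∈ d) (hxy : x ≠ y) : 2 ≤ d.length := by
  calc 2 = ({x, y} : Finset ℕ).card := (Finset.card_pair hxy).symm
    _ ≤ d.toFinset.card := Finset.card_le_card (by
        intro z hz
        simp only [Finset.mem_insert, Finset.mem_singleton] at hz
        rcases hz with rfl | rfl <;> simp [hx, hy])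
    _ = d.length := List.toFinset_card_of_nodup hd

theorem length_le_one_of_all_eq {d : List ℕ} {m : ℕ} (hd : d.Nodup)
    (h : ∀ y ∈ d, y = m) : d.length ≤ 1 := by
  match d with
  | [] => simp
  | [y] => simp
  | y :: z :: t =>
    exfalso
    have hy := h y (by simp)
    have hz := h z (by simp)
    subst hy; subst hz
    simp at hd

theorem mem_of_isMin12 {l : List ℕ} {x : ℕ} (h : isMin12 l x = true) : x ∈ l := by
  unfold isMin12 at h
  rcases Bool.or_eq_true _ _ |>.mp h with h1 | h2
  · rw [beq_iff_eq] at h1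
    exact (List.min?_eq_some_iff'.mp h1).1
  · rw [beq_iff_eq] at h2
    exact List.mem_of_mem_erase (List.min?_eq_some_iff'.mp h2).1

theorem isMin12_true_iff {l : List ℕ} {x : ℕ} (hl : l.Nodup) (hx : x ∈ l) :
    isMin12 l x = true ↔ l.countP (fun y => decide (y < x)) ≤ 1 := by
  obtain ⟨m, hm⟩ := Option.isSome_iff_exists.mp (List.isSome_min?_of_mem hx)
  obtain ⟨hm1, hm2⟩ := List.min?_eq_some_iff'.mp hm
  unfold isMin12
  rw [hm]
  simp only [Option.getD_some, Bool.or_eq_true, beq_iff_eq, Option.some.injEq]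
  constructor
  · rintro (h1 | h2)
    · have h0 : l.countP (fun y => decide (y < x)) = 0 := by
        rw [List.countP_eq_zero]
        intro y hy
        have := hm2 y hy
        simp only [decide_eq_true_eq]
        omega
      omega
    · obtain ⟨hx1, hx2⟩ := List.min?_eq_some_iff'.mp h2
      rw [List.countP_eq_length_filter]
      apply length_le_one_of_all_eq (hl.filter _)
      intro y hy
      rw [List.mem_filter] at hy
      obtain ⟨hyl, hyx⟩ := hy
      by_contra hym
      have hye : y ∈ l.erase m := (List.mem_erase_of_ne hym).mpr hyl
      have := hx2 y hye
      simp only [decide_eq_true_eq] at hyx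
      omega
  · intro hc
    by_cases hxm : m = x
    · exact Or.inl hxm
    right
    have hmx : m < x := Nat.lt_of_le_of_ne (hm2 x hx) hxm
    have key : ∀ y ∈ l, y < x → y = m := by
      intro y hy hyx
      by_contra hne2
      have h1 : m ∈ l.filter (fun y => decide (y < x)) := by
        rw [List.mem_filter]; exact ⟨hm1, by simpa using hmx⟩
      have h2 : y ∈ l.filter (fun y => decide (y < x)) := by
        rw [List.mem_filter]; exact ⟨hy, by simpa using hyx⟩
      have h3 := two_le_length_of_two_mem (hl.filter _) h2 h1 hne2
      rw [List.countP_eq_length_filter] at hc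
      omega
    rw [List.min?_eq_some_iff']
    refine ⟨(List.mem_erase_of_ne (fun h => hxm h.symm)).mpr hx, ?_⟩
    intro b hb
    obtain ⟨hbm, hbl⟩ := hl.mem_erase_iff.mp hb
    by_contra hxb
    push_neg at hxb
    exact hbm (key b hbl hxb)

theorem isMin12_perm {l l' : List ℕ} (h : l.Perm l') (hl : l.Nodup) (x : ℕ) :
    isMin12 l x = isMin12 l' x := by
  have hl' : l'.Nodup := hl.perm h
  rw [Bool.eq_iff_iff]
  by_cases hx : x ∈ l
  · have hx' : x ∈ l' := h.mem_iff.mp hx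
    rw [isMin12_true_iff hl hx, isMin12_true_iff hl' hx', h.countP_eq]
  · have hx' : x ∉ l' := fun h' => hx (h.mem_iff.mpr h')
    constructor
    · intro hh; exact absurd (mem_of_isMin12 hh) hx
    · intro hh; exact absurd (mem_of_isMin12 hh) hx' 

/-- Two distinct witnesses of `isMin12` when the list has at least two elements. -/
theorem exists_two_isMin12 {l : List ℕ} (hl : l.Nodup) (h2 : 2 ≤ l.length) :
    ∃ y z, y ≠ z ∧ y ∈ l ∧ z ∈ l ∧ isMin12 l y = true ∧ isMin12 l z = true := by
  have hne : l ≠ [] := by intro h; subst h; simp at h2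
  obtain ⟨m, hm⟩ : ∃ m, l.min? = some m := by
    cases h : l.min? with
    | none => exact absurd (List.min?_eq_none_iff.mp h) hne
    | some m => exact ⟨m, rfl⟩
  obtain ⟨hm1, _⟩ := List.min?_eq_some_iff'.mp hm
  have hel : (l.erase m).length = l.length - 1 := List.length_erase_of_mem hm1
  have hene : l.erase m ≠ [] := by
    intro h; rw [h] at hel; simp at hel; omega
  obtain ⟨m2, hm2⟩ : ∃ m2, (l.erase m).min? = some m2 := by
    cases h : (l.erase m).min? with
    | none => exact absurd (List.min?_eq_none_iff.mp h) hene
    | some m2 => exact ⟨m2, rfl⟩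
  obtain ⟨hm21, _⟩ := List.min?_eq_some_iff'.mp hm2
  obtain ⟨hm2ne, hm2l⟩ := hl.mem_erase_iff.mp hm21
  refine ⟨m, m2, fun h => hm2ne h.symm, hm1, hm2l, isMin12_min l hm, ?_⟩
  unfold isMin12
  rw [hm]
  simp [hm2]

theorem not_three_isMin12 {l : List ℕ} (hl : l.Nodup) {a b c : ℕ}
    (ha : a ∈ l) (hb : b ∈ l) (hc : c ∈ l) (hab : a ≠ b) (hbc : b ≠ c) (hac : a ≠ c)
    (pa : isMin12 l a = true) (pb : isMin12 l b = true) (pc : isMin12 l c = true) : False := by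
  have key : ∀ x y z : ℕ, x ∈ l → y ∈ l → z ∈ l → x ≠ y → x < z → y < z →
      isMin12 l z = true → False := by
    intro x y z hx hy hz hxy hxz hyz hm
    have h1 := (isMin12_true_iff hl hz).mp hm
    rw [List.countP_eq_length_filter] at h1
    have h2 : 2 ≤ (l.filter (fun w => decide (w < z))).length := by
      apply two_le_length_of_two_mem (hl.filter _) _ _ hxy
      · rw [List.mem_filter]; exact ⟨hx, by simpa using hxz⟩
      · rw [List.mem_filter]; exact ⟨hy, by simpa using hyz⟩
    omega
  rcases Nat.lt_trichotomy a b with h1 | h1 | h1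
  · rcases Nat.lt_trichotomy b c with h2 | h2 | h2
    · exact key a b c ha hb hc hab (by omega) h2 pc
    · exact absurd h2 hbc
    · exact key a c b ha hc hb hac h1 h2 pb
  · exact absurd h1 hab
  · rcases Nat.lt_trichotomy a c with h2 | h2 | h2
    · exact key b a c hb ha hc (fun h => hab h.symm) (by omega) h2 pc
    · exact absurd h2 hac
    · exact key b c a hb hc ha hbc h1 h2 pa

/-! ### Basic facts about trees -/

theorem numChildren_eq_zero_of_not_memB {t : BTree} {x : ℕ} (h : t.memB x = false) :
    t.numChildren x = 0 := by
  induction t with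
  | nil => rfl
  | node v l r ihl ihr =>
    simp only [BTree.memB, Bool.or_eq_false_iff, beq_eq_false_iff_ne] at h
    obtain ⟨⟨hxv, hl⟩, hr⟩ := h
    simp [BTree.numChildren, hxv, ihl hl, ihr hr]

theorem isLeaf_node_left {v x : ℕ} {l r : BTree} (hxv : x ≠ v) (hl : l.memB x = true)
    (hr : r.memB x = false) : (BTree.node v l r).IsLeaf x ↔ l.IsLeaf x := by
  simp [BTree.IsLeaf, BTree.memB, BTree.numChildren, hxv, hl, hr,
    numChildren_eq_zero_of_not_memB hr]

theorem isLeaf_node_right {v x : ℕ} {l r : BTree} (hxv : x ≠ v) (hl : l.memB x = false)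
    (hr : r.memB x = true) : (BTree.node v l r).IsLeaf x ↔ r.IsLeaf x := by
  simp [BTree.IsLeaf, BTree.memB, BTree.numChildren, hxv, hl, hr,
    numChildren_eq_zero_of_not_memB hl]

theorem isLeaf_node_root {v : ℕ} {l r : BTree} :
    (BTree.node v l r).IsLeaf v ↔ l = .nil ∧ r = .nil := by
  simp only [BTree.IsLeaf, BTree.memB, BTree.numChildren, beq_self_eq_true, Bool.true_or, true_and,
    if_pos rfl]
  constructor
  · intro h
    constructor
    · by_contra hne; simp [hne] at h
    · by_contra hne; simp [hne] at h
  · rintro ⟨rfl, rfl⟩; simp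

/-! ### The recursion for `min12Tree` -/

theorem pivot_lt_length {l : List ℕ} (hl : l ≠ []) : l.findIdx (isMin12 l) < l.length := by
  apply List.findIdx_lt_length_of_exists
  obtain ⟨m, hm⟩ : ∃ m, l.min? = some m := by
    cases h : l.min? with
    | none => exact absurd (List.min?_eq_none_iff.mp h) hl
    | some m => exact ⟨m, rfl⟩
  exact ⟨m, (List.min?_eq_some_iff'.mp hm).1, isMin12_min l hm⟩

theorem mm12Aux_nil (fuel : ℕ) : mm12Aux fuel [] = .nil := by
  cases fuel <;> simp [mm12Aux]

theorem mm12Aux_congr : ∀ (n f1 f2 : ℕ) (l : List ℕ), l.length ≤ n → l.length ≤ f1 →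
    l.length ≤ f2 → mm12Aux f1 l = mm12Aux f2 l := by
  intro n
  induction n with
  | zero =>
    intro f1 f2 l h _ _
    have : l = [] := List.length_eq_zero_iff.mp (Nat.le_zero.mp h)
    subst this
    rw [mm12Aux_nil, mm12Aux_nil]
  | succ n ih =>
    intro f1 f2 l h h1 h2
    rcases l with _ | ⟨a, t⟩
    · rw [mm12Aux_nil, mm12Aux_nil]
    set l := a :: t with hl
    have hlne : l ≠ [] := by simp [hl]
    have hlpos : 1 ≤ l.length := by simp [hl]
    obtain ⟨f1', rfl⟩ : ∃ f1', f1 = f1' + 1 := ⟨f1 - 1, by omega⟩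
    obtain ⟨f2', rfl⟩ : ∃ f2', f2 = f2' + 1 := ⟨f2 - 1, by omega⟩
    have hk := pivot_lt_length hlne
    rw [mm12Aux, mm12Aux]
    rw [if_neg (by simp [List.isEmpty_eq_false_iff.mpr hlne])]
    rw [if_neg (by simp [List.isEmpty_eq_false_iff.mpr hlne])]
    have ht : (l.take (l.findIdx (isMin12 l))).length ≤ l.length - 1 := by
      rw [List.length_take]; omega
    have hd : (l.drop (l.findIdx (isMin12 l) + 1)).length ≤ l.length - 1 := by
      rw [List.length_drop]; omega
    show BTree.node (l.getD (l.findIdx (isMin12 l)) 0)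
        (mm12Aux f1' (l.take (l.findIdx (isMin12 l))))
        (mm12Aux f1' (l.drop (l.findIdx (isMin12 l) + 1))) =
      BTree.node (l.getD (l.findIdx (isMin12 l)) 0)
        (mm12Aux f2' (l.take (l.findIdx (isMin12 l))))
        (mm12Aux f2' (l.drop (l.findIdx (isMin12 l) + 1)))
    rw [ih f1' f2' _ (by omega) (by omega) (by omega),
        ih f1' f2' _ (by omega) (by omega) (by omega)]

theorem mm12Aux_eq {fuel : ℕ} {l : List ℕ} (h : l.length ≤ fuel) :
    mm12Aux fuel l = min12Tree l := by
  exact mm12Aux_congr (max fuel l.length) fuel l.length l (by omega) h (le_refl _)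

theorem min12Tree_eq {l : List ℕ} (hl : l ≠ []) :
    min12Tree l = .node (l.getD (l.findIdx (isMin12 l)) 0)
      (min12Tree (l.take (l.findIdx (isMin12 l))))
      (min12Tree (l.drop (l.findIdx (isMin12 l) + 1))) := by
  have hk := pivot_lt_length hl
  have hlpos : 1 ≤ l.length := List.length_pos_iff.mpr hl
  obtain ⟨f, hf⟩ : ∃ f, l.length = f + 1 := ⟨l.length - 1, by omega⟩
  rw [min12Tree, hf, mm12Aux]
  rw [if_neg (by simp [List.isEmpty_eq_false_iff.mpr hl])]
  show BTree.node (l.getD (l.findIdx (isMin12 l)) 0)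
      (mm12Aux f (l.take (l.findIdx (isMin12 l))))
      (mm12Aux f (l.drop (l.findIdx (isMin12 l) + 1))) = _
  rw [mm12Aux_eq (by rw [List.length_take]; omega),
      mm12Aux_eq (by rw [List.length_drop]; omega)]

theorem min12Tree_ne_nil {l : List ℕ} (hl : l ≠ []) : min12Tree l ≠ .nil := by
  rw [min12Tree_eq hl]; simp

theorem memB_min12Tree_aux : ∀ (n : ℕ) (l : List ℕ) (x : ℕ), l.length ≤ n →
    ((min12Tree l).memB x = true ↔ x ∈ l) := by
  intro n
  induction n with
  | zero =>
    intro l x h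
    have : l = [] := List.length_eq_zero_iff.mp (Nat.le_zero.mp h)
    subst this
    simp [min12Tree, mm12Aux, BTree.memB]
  | succ n ih =>
    intro l x h
    rcases eq_or_ne l [] with rfl | hl
    · simp [min12Tree, mm12Aux, BTree.memB]
    rw [min12Tree_eq hl]
    have hk := pivot_lt_length hl
    set k := l.findIdx (isMin12 l) with hkdef
    have hgd : l.getD k 0 = l[k] := List.getD_eq_getElem _ _ hk
    show ((x == l.getD k 0) || (min12Tree (l.take k)).memB x
        || (min12Tree (l.drop (k + 1))).memB x) = true ↔ x ∈ l
    rw [Bool.or_eq_true, Bool.or_eq_true, beq_iff_eq]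
    rw [ih (l.take k) x (by rw [List.length_take]; omega),
        ih (l.drop (k + 1)) x (by rw [List.length_drop]; omega)]
    constructor
    · rintro ((rfl | h1) | h2)
      · exact hgd ▸ List.getElem_mem hk
      · exact List.mem_of_mem_take h1
      · exact List.mem_of_mem_drop h2
    · intro hx
      conv at hx => rw [← List.take_append_drop k l]
      rw [List.mem_append] at hx
      rcases hx with h1 | h2
      · exact Or.inl (Or.inr h1)
      · rw [List.drop_eq_getElem_cons hk] at h2
        rcases List.mem_cons.mp h2 with rfl | h3
        · exact Or.inl (Or.inl hgd.symm)
        · exact Or.inr h3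

theorem memB_min12Tree {l : List ℕ} {x : ℕ} : (min12Tree l).memB x = true ↔ x ∈ l :=
  memB_min12Tree_aux l.length l x (le_refl _)

theorem memB_min12Tree_false {l : List ℕ} {x : ℕ} (h : x ∉ l) :
    (min12Tree l).memB x = false := by
  rw [Bool.eq_false_iff]
  intro hh
  exact h (memB_min12Tree.mp hh)

/-! ### Prefix irrelevance -/

theorem findIdx_congr : ∀ {l : List ℕ} {p q : ℕ → Bool}, (∀ x ∈ l, p x = q x) →
    l.findIdx p = l.findIdx q := by
  intro l
  induction l with
  | nil => intro p q h; rfl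
  | cons a t ih =>
    intro p q h
    rw [List.findIdx_cons, List.findIdx_cons, h a (by simp),
      ih (fun x hx => h x (by simp [hx]))]

theorem exists_min_pair {l : List ℕ} (hl : l.Nodup) (h2 : 2 ≤ l.length) :
    ∃ m1 m2, m1 < m2 ∧ m1 ∈ l ∧ m2 ∈ l ∧ isMin12 l m1 = true ∧ isMin12 l m2 = true ∧
      (∀ y ∈ l, m1 ≤ y) ∧ (∀ y ∈ l, y ≠ m1 → m2 ≤ y) := by
  have hne : l ≠ [] := by intro h; subst h; simp at h2
  obtain ⟨m1, hm1⟩ : ∃ m, l.min? = some m := by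
    cases h : l.min? with
    | none => exact absurd (List.min?_eq_none_iff.mp h) hne
    | some m => exact ⟨m, rfl⟩
  obtain ⟨hm11, hm12'⟩ := List.min?_eq_some_iff'.mp hm1
  have hel : (l.erase m1).length = l.length - 1 := List.length_erase_of_mem hm11
  have hene : l.erase m1 ≠ [] := by
    intro h; rw [h] at hel; simp at hel; omega
  obtain ⟨m2, hm2⟩ : ∃ m, (l.erase m1).min? = some m := by
    cases h : (l.erase m1).min? with
    | none => exact absurd (List.min?_eq_none_iff.mp h) hene
    | some m => exact ⟨m, rfl⟩
  obtain ⟨hm21, hm22⟩ := List.min?_eq_some_iff'.mp hm2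
  obtain ⟨hm2ne, hm2l⟩ := hl.mem_erase_iff.mp hm21
  refine ⟨m1, m2, ?_, hm11, hm2l, isMin12_min l hm1, ?_, hm12', ?_⟩
  · have := hm12' m2 hm2l
    omega
  · unfold isMin12
    rw [hm1]
    simp [hm2]
  · intro y hy hyne
    exact hm22 y ((hl.mem_erase_iff).mpr ⟨hyne, hy⟩)

theorem isMin12_append_eq {u w : List ℕ} (hn : (u ++ w).Nodup)
    {m1 m2 : ℕ} (hm12 : m1 ≠ m2) (hm1w : m1 ∈ w) (hm2w : m2 ∈ w)
    (hmin1 : ∀ y ∈ u ++ w, m1 ≤ y) (hmin2 : ∀ y ∈ u ++ w, y ≠ m1 → m2 ≤ y)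
    {y : ℕ} (hy : y ∈ w) : isMin12 (u ++ w) y = isMin12 w y := by
  have hnw : w.Nodup := (List.nodup_append'.mp hn).2.1
  have hyl : y ∈ u ++ w := by simp [hy]
  rw [Bool.eq_iff_iff, isMin12_true_iff hn hyl, isMin12_true_iff hnw hy,
      List.countP_append]
  constructor
  · intro h; omega
  · intro h
    have hu0 : u.countP (fun z => decide (z < y)) = 0 := by
      rw [List.countP_eq_zero]
      intro z hz
      simp only [decide_eq_true_eq]
      intro hzy
      have hdisj := (List.nodup_append'.mp hn).2.2
      have hzm1 : z ≠ m1 := fun hh => hdisj hz (hh ▸ hm1w)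
      have h1 : m1 < y := by
        have := hmin1 z (by simp [hz]); omega
      have h2 : m2 < y := by
        have := hmin2 z (by simp [hz]) hzm1; omega
      have hcnt : 2 ≤ w.countP (fun z => decide (z < y)) := by
        rw [List.countP_eq_length_filter]
        apply two_le_length_of_two_mem (hnw.filter _) (x := m1) (y := m2) _ _ hm12
        · rw [List.mem_filter]; exact ⟨hm1w, by simpa using h1⟩
        · rw [List.mem_filter]; exact ⟨hm2w, by simpa using h2⟩
      omega
    omega

theorem leaf_head_append_aux : ∀ (n : ℕ) (u w : List ℕ), (u ++ w).length ≤ n →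
    (u ++ w).Nodup → w ≠ [] →
    ((min12Tree (u ++ w)).IsLeaf w.headI ↔ (min12Tree w).IsLeaf w.headI) := by
  intro n
  induction n with
  | zero =>
    intro u w h hn hw
    rcases u with _ | _
    · simp
    · simp at h
  | succ n ih =>
    intro u w h hn hw
    rcases eq_or_ne u [] with rfl | hu
    · simp
    obtain ⟨x, w', rfl⟩ : ∃ x w', w = x :: w' := by
      rcases w with _ | ⟨x, w'⟩
      · exact absurd rfl hw
      · exact ⟨x, w', rfl⟩
    rw [show (x :: w').headI = x from rfl]
    have hlne : (u ++ x :: w') ≠ [] := by simp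
    have hklt := pivot_lt_length hlne
    have hulen : 1 ≤ u.length := List.length_pos_iff.mpr hu
    have hlen : (u ++ x :: w').length = u.length + w'.length + 1 := by
      simp only [List.length_append, List.length_cons]
      omega
    have h' : u.length + w'.length + 1 ≤ n + 1 := by rw [← hlen]; exact h
    have hxl : x ∈ u ++ x :: w' := by simp
    have hdisj := (List.nodup_append'.mp hn).2.2
    have hnw : (x :: w').Nodup := (List.nodup_append'.mp hn).2.1
    rcases Nat.lt_trichotomy ((u ++ x :: w').findIdx (isMin12 (u ++ x :: w'))) u.length with hcase | hcase | hcase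
    · -- pivot strictly inside u
      have hm : (u ++ x :: w').getD ((u ++ x :: w').findIdx (isMin12 (u ++ x :: w'))) 0 = u[((u ++ x :: w').findIdx (isMin12 (u ++ x :: w')))] := by
        rw [List.getD_eq_getElem _ _ hklt, List.getElem_append_left hcase]
      have hxm : x ≠ (u ++ x :: w').getD ((u ++ x :: w').findIdx (isMin12 (u ++ x :: w'))) 0 := by
        rw [hm]
        intro hh
        exact hdisj (show x ∈ u by rw [hh]; exact List.getElem_mem hcase)
          List.mem_cons_self
      have htake : (u ++ x :: w').take ((u ++ x :: w').findIdx (isMin12 (u ++ x :: w'))) = u.take ((u ++ x :: w').findIdx (isMin12 (u ++ x :: w'))) := by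
        rw [List.take_append, show ((u ++ x :: w').findIdx (isMin12 (u ++ x :: w'))) - u.length = 0 from by omega]
        simp
      have hdrop : (u ++ x :: w').drop (((u ++ x :: w').findIdx (isMin12 (u ++ x :: w'))) + 1) = u.drop (((u ++ x :: w').findIdx (isMin12 (u ++ x :: w'))) + 1) ++ (x :: w') := by
        rw [List.drop_append, show ((u ++ x :: w').findIdx (isMin12 (u ++ x :: w'))) + 1 - u.length = 0 from by omega]
        rfl
      have hmemtake : ((min12Tree ((u ++ x :: w').take ((u ++ x :: w').findIdx (isMin12 (u ++ x :: w'))))).memB x) = false := by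
        rw [htake]
        apply memB_min12Tree_false
        intro hmem
        exact hdisj (List.mem_of_mem_take hmem) (by simp)
      have hmemdrop : ((min12Tree ((u ++ x :: w').drop (((u ++ x :: w').findIdx (isMin12 (u ++ x :: w'))) + 1))).memB x) = true := by
        rw [hdrop]
        exact memB_min12Tree.mpr (by simp)
      rw [min12Tree_eq hlne, isLeaf_node_right hxm hmemtake hmemdrop, hdrop]
      have hnd' : (u.drop (((u ++ x :: w').findIdx (isMin12 (u ++ x :: w'))) + 1) ++ (x :: w')).Nodup :=
        List.Nodup.sublist (List.Sublist.append (List.drop_sublist _ _) (List.Sublist.refl _)) hn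
      have hlen' : (u.drop (((u ++ x :: w').findIdx (isMin12 (u ++ x :: w'))) + 1) ++ (x :: w')).length ≤ n := by
        simp only [List.length_append, List.length_drop, List.length_cons]
        omega
      exact ih _ _ hlen' hnd' (by simp)
    · -- pivot is exactly the head of w
      have hgd : (u ++ x :: w').getD ((u ++ x :: w').findIdx (isMin12 (u ++ x :: w'))) 0 = x := by
        rw [List.getD_eq_getElem _ _ hklt,
          List.getElem_append_right (le_of_eq hcase.symm)]
        simp [hcase]
      have hgde : (u ++ x :: w')[((u ++ x :: w').findIdx (isMin12 (u ++ x :: w')))]'hklt = x := by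
        rw [← List.getD_eq_getElem _ 0 hklt]
        exact hgd
      have hPx : isMin12 (u ++ x :: w') x = true := by
        have h0 := List.findIdx_getElem (p := isMin12 (u ++ x :: w'))
          (xs := u ++ x :: w') (w := hklt)
        rwa [hgde] at h0
      have hw1 : w' ≠ [] := by
        intro hw'
        subst hw'
        obtain ⟨y, z, hyz, hyl, hzl, hy, hz⟩ := exists_two_isMin12 hn (by simp; omega)
        have hpick : ∃ y', y' ∈ u ++ [x] ∧ y' ≠ x ∧ isMin12 (u ++ [x]) y' = true := by
          by_cases hyx : y = x
          · exact ⟨z, hzl, by rw [← hyx]; exact fun hh => hyz hh.symm, hz⟩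
          · exact ⟨y, hyl, hyx, hy⟩
        obtain ⟨y', hy'm, hy'x, hy'sat⟩ := hpick
        have hy'u : y' ∈ u := by
          rcases List.mem_append.mp hy'm with h'' | h''
          · exact h''
          · simp at h''
            exact absurd h'' hy'x
        obtain ⟨j, hj, hju⟩ := List.mem_iff_getElem.mp hy'u
        have hjl : j < (u ++ [x]).length := by simp; omega
        have hsat : isMin12 (u ++ [x]) ((u ++ [x])[j]'hjl) = true := by
          rw [List.getElem_append_left hj, hju]
          exact hy'sat
        have hfalse : isMin12 (u ++ [x]) ((u ++ [x])[j]'hjl) = false :=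
          List.not_of_lt_findIdx (by omega)
        rw [hsat] at hfalse
        exact Bool.noConfusion hfalse
      have htake : (u ++ x :: w').take ((u ++ x :: w').findIdx (isMin12 (u ++ x :: w'))) = u := by
        rw [hcase]
        exact List.take_left
      have hdrop : (u ++ x :: w').drop (((u ++ x :: w').findIdx (isMin12 (u ++ x :: w'))) + 1) = w' := by
        rw [List.drop_append, List.drop_eq_nil_of_le (by omega),
            show ((u ++ x :: w').findIdx (isMin12 (u ++ x :: w'))) + 1 - u.length = 1 from by omega]
        rfl
      rw [min12Tree_eq hlne, hgd, htake, hdrop, isLeaf_node_root]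
      have hPxw : isMin12 (x :: w') x = true := by
        have h1 := (isMin12_true_iff hn hxl).mp hPx
        rw [List.countP_append] at h1
        exact (isMin12_true_iff hnw (by simp)).mpr (by omega)
      have hkw : (x :: w').findIdx (isMin12 (x :: w')) = 0 := by
        rw [List.findIdx_cons, hPxw]
        rfl
      rw [min12Tree_eq (show (x :: w') ≠ [] by simp), hkw]
      rw [show (x :: w').getD 0 0 = x from rfl, show (x :: w').take 0 = ([] : List ℕ) from rfl,
          show (x :: w').drop (0 + 1) = w' from rfl, isLeaf_node_root]
      constructor
      · rintro ⟨h1, _⟩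
        exact absurd h1 (min12Tree_ne_nil hu)
      · rintro ⟨_, h2⟩
        exact absurd h2 (min12Tree_ne_nil hw1)
    · -- pivot strictly inside the tail of w
      obtain ⟨m1, m2, hm12lt, hm1l, hm2l, hs1, hs2, hmin1, hmin2⟩ :=
        exists_min_pair hn (by simp; omega)
      have hnotu : ∀ y, isMin12 (u ++ x :: w') y = true → y ∉ u := by
        intro y hy hyu
        obtain ⟨j, hj, hju⟩ := List.mem_iff_getElem.mp hyu
        have hjl : j < (u ++ x :: w').length := by simp; omega
        have hsat : isMin12 (u ++ x :: w') ((u ++ x :: w')[j]'hjl) = true := by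
          rw [List.getElem_append_left hj, hju]
          exact hy
        have hfalse : isMin12 (u ++ x :: w') ((u ++ x :: w')[j]'hjl) = false :=
          List.not_of_lt_findIdx (by omega)
        rw [hsat] at hfalse
        exact Bool.noConfusion hfalse
      have hm1w : m1 ∈ x :: w' := by
        rcases List.mem_append.mp hm1l with h'' | h''
        · exact absurd h'' (hnotu _ hs1)
        · exact h''
      have hm2w : m2 ∈ x :: w' := by
        rcases List.mem_append.mp hm2l with h'' | h''
        · exact absurd h'' (hnotu _ hs2)
        · exact h''
      have hpred : ∀ y ∈ x :: w', isMin12 (u ++ x :: w') y = isMin12 (x :: w') y :=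
        fun y hy => isMin12_append_eq hn (by omega) hm1w hm2w hmin1 hmin2 hy
      have hfu : u.findIdx (isMin12 (u ++ x :: w')) = u.length := by
        apply List.findIdx_eq_length_of_false
        intro z hz
        cases hq : isMin12 (u ++ x :: w') z with
        | false => rfl
        | true => exact absurd hz (hnotu z hq)
      have happ : ((u ++ x :: w').findIdx (isMin12 (u ++ x :: w'))) = u.length + ((x :: w').findIdx (isMin12 (u ++ x :: w'))) := by
        have heq := List.findIdx_append (p := isMin12 (u ++ x :: w')) (l₁ := u) (l₂ := x :: w')
        rw [hfu, if_neg (lt_irrefl _)] at heq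
        rw [heq]
        omega
      have hkw : ((x :: w').findIdx (isMin12 (u ++ x :: w'))) = ((x :: w').findIdx (isMin12 (x :: w'))) := findIdx_congr hpred
      have hK : ((u ++ x :: w').findIdx (isMin12 (u ++ x :: w'))) = u.length + ((x :: w').findIdx (isMin12 (x :: w'))) := by rw [happ, hkw]
      have hk'pos : 1 ≤ ((x :: w').findIdx (isMin12 (x :: w'))) := by omega
      have hk'lt : ((x :: w').findIdx (isMin12 (x :: w'))) < (x :: w').length := by
        rw [hK] at hklt
        simp only [List.length_append, List.length_cons] at hklt ⊢
        omega
      have hgdl : (u ++ x :: w').getD ((u ++ x :: w').findIdx (isMin12 (u ++ x :: w'))) 0 = (x :: w')[((x :: w').findIdx (isMin12 (x :: w')))]'hk'lt := by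
        rw [List.getD_eq_getElem _ _ hklt]
        have : u.length ≤ ((u ++ x :: w').findIdx (isMin12 (u ++ x :: w'))) := by omega
        rw [List.getElem_append_right this]
        congr 1
        omega
      have hgdw : (x :: w').getD ((x :: w').findIdx (isMin12 (x :: w'))) 0 = (x :: w')[((x :: w').findIdx (isMin12 (x :: w')))]'hk'lt :=
        List.getD_eq_getElem _ _ hk'lt
      have hxm : x ≠ (x :: w')[((x :: w').findIdx (isMin12 (x :: w')))]'hk'lt := by
        intro hh
        have h0 : (x :: w')[0]'(by simp) = (x :: w')[((x :: w').findIdx (isMin12 (x :: w')))]'hk'lt := hh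
        have := hnw.getElem_inj_iff.mp h0
        omega
      obtain ⟨k'', hk''⟩ : ∃ k'', ((x :: w').findIdx (isMin12 (x :: w'))) = k'' + 1 := ⟨((x :: w').findIdx (isMin12 (x :: w'))) - 1, by omega⟩
      have hxtake : x ∈ (x :: w').take ((x :: w').findIdx (isMin12 (x :: w'))) := by
        rw [hk'', List.take_succ_cons]
        exact List.mem_cons_self
      have hxdrop : x ∉ (x :: w').drop (((x :: w').findIdx (isMin12 (x :: w'))) + 1) := by
        intro hmem
        have hnw2 := hnw
        rw [← List.take_append_drop (((x :: w').findIdx (isMin12 (x :: w'))) + 1) (x :: w'), List.nodup_append'] at hnw2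
        refine hnw2.2.2 ?_ hmem
        rw [hk'', show k'' + 1 + 1 = (k'' + 1) + 1 from rfl, List.take_succ_cons]
        exact List.mem_cons_self
      have htake : (u ++ x :: w').take ((u ++ x :: w').findIdx (isMin12 (u ++ x :: w'))) = u ++ (x :: w').take ((x :: w').findIdx (isMin12 (x :: w'))) := by
        rw [List.take_append, List.take_of_length_le (by omega),
          show ((u ++ x :: w').findIdx (isMin12 (u ++ x :: w'))) - u.length = ((x :: w').findIdx (isMin12 (x :: w'))) from by omega]
      have hdrop : (u ++ x :: w').drop (((u ++ x :: w').findIdx (isMin12 (u ++ x :: w'))) + 1) = (x :: w').drop (((x :: w').findIdx (isMin12 (x :: w'))) + 1) := by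
        rw [List.drop_append, List.drop_eq_nil_of_le (by omega),
            show ((u ++ x :: w').findIdx (isMin12 (u ++ x :: w'))) + 1 - u.length = ((x :: w').findIdx (isMin12 (x :: w'))) + 1 from by omega]
        rfl
      rw [min12Tree_eq hlne, hgdl, htake, hdrop]
      rw [min12Tree_eq (show (x :: w') ≠ [] by simp), hgdw]
      rw [isLeaf_node_left hxm
        (memB_min12Tree.mpr (List.mem_append.mpr (Or.inr hxtake)))
        (memB_min12Tree_false hxdrop)]
      rw [isLeaf_node_left hxm (memB_min12Tree.mpr hxtake) (memB_min12Tree_false hxdrop)]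
      have hheadtake : ((x :: w').take ((x :: w').findIdx (isMin12 (x :: w')))).headI = x := by
        rw [hk'', List.take_succ_cons]
        rfl
      have hnd' : (u ++ (x :: w').take ((x :: w').findIdx (isMin12 (x :: w')))).Nodup :=
        List.Nodup.sublist (List.Sublist.append (List.Sublist.refl _) (List.take_sublist _ _)) hn
      have hlen' : (u ++ (x :: w').take ((x :: w').findIdx (isMin12 (x :: w')))).length ≤ n := by
        simp only [List.length_append, List.length_take, List.length_cons]
        omega
      have hres := ih u ((x :: w').take ((x :: w').findIdx (isMin12 (x :: w')))) hlen' hnd' (by rw [hk'', List.take_succ_cons]; simp)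
      rw [hheadtake] at hres
      exact hres

theorem leaf_head_append {u w : List ℕ} (hn : (u ++ w).Nodup) (hw : w ≠ []) :
    (min12Tree (u ++ w)).IsLeaf w.headI ↔ (min12Tree w).IsLeaf w.headI :=
  leaf_head_append_aux (u ++ w).length u w (le_refl _) hn hw

/-! ### The first-entry leaf predicate and the rotation lemma -/

def F (l : List ℕ) : Prop := (min12Tree l).IsLeaf l.headI

theorem F_singleton (x : ℕ) : F [x] := by
  have hne : ([x] : List ℕ) ≠ [] := by simp
  have hk : ([x] : List ℕ).findIdx (isMin12 [x]) = 0 := by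
    have := pivot_lt_length hne
    simp only [List.length_singleton] at this
    omega
  unfold F
  rw [min12Tree_eq hne, hk]
  exact isLeaf_node_root.mpr ⟨rfl, rfl⟩

theorem not_F_of_pivot_zero' {l : List ℕ} (hne : l ≠ [])
    (hk : l.findIdx (isMin12 l) = 0) (h2 : 2 ≤ l.length) : ¬ F l := by
  intro hF
  unfold F at hF
  rw [min12Tree_eq hne, hk] at hF
  obtain ⟨a, t, rfl⟩ : ∃ a t, l = a :: t := by
    rcases l with _ | ⟨a, t⟩
    · exact absurd rfl hne
    · exact ⟨a, t, rfl⟩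
  have hteq : t ≠ [] := by
    intro hh; subst hh; simp at h2
  rw [show ((a :: t).getD 0 0) = a from rfl] at hF
  rw [show ((a :: t).headI) = a from rfl] at hF
  rw [show ((a :: t).take 0) = [] from rfl] at hF
  rw [show ((a :: t).drop (0 + 1)) = t from rfl] at hF
  rw [isLeaf_node_root] at hF
  exact min12Tree_ne_nil hteq hF.2

theorem not_F_pair {x y : ℕ} (h : x ≠ y) : ¬ F [x, y] := by
  have hne : ([x, y] : List ℕ) ≠ [] := by simp
  have hmin : isMin12 [x, y] x = true := by
    unfold isMin12
    rcases Nat.lt_or_ge x y with hle | hle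
    · have h1 : ([x, y] : List ℕ).min? = some x := by
        rw [List.min?_eq_some_iff']
        refine ⟨by simp, ?_⟩
        intro b hb
        rcases List.mem_cons.mp hb with rfl | hb2
        · exact le_refl _
        · simp at hb2; omega
      simp [h1]
    · have hyx : y < x := by
        rcases Nat.lt_or_ge y x with h' | h'
        · exact h'
        · omega
      have h1 : ([x, y] : List ℕ).min? = some y := by
        rw [List.min?_eq_some_iff']
        refine ⟨by simp, ?_⟩
        intro b hb
        rcases List.mem_cons.mp hb with rfl | hb2
        · omega
        · simp at hb2; omega
      rw [h1]
      simp only [Option.getD_some]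
      have h2 : ([x, y] : List ℕ).erase y = [x] := by
        simp [List.erase_cons, h]
      rw [h2]
      simp
  have hk : ([x, y] : List ℕ).findIdx (isMin12 [x, y]) = 0 := by
    rw [List.findIdx_cons, hmin]
    rfl
  exact not_F_of_pivot_zero' hne hk (by simp)

theorem F_of_pivot_pos {l : List ℕ} (hl : l.Nodup) (hne : l ≠ [])
    (hk : 1 ≤ l.findIdx (isMin12 l)) : F l ↔ F (l.take (l.findIdx (isMin12 l))) := by
  have hklt := pivot_lt_length hne
  obtain ⟨a, t, rfl⟩ : ∃ a t, l = a :: t := by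
    rcases l with _ | ⟨a, t⟩
    · exact absurd rfl hne
    · exact ⟨a, t, rfl⟩
  obtain ⟨k', hk2⟩ : ∃ k', (a :: t).findIdx (isMin12 (a :: t)) = k' + 1 :=
    ⟨(a :: t).findIdx (isMin12 (a :: t)) - 1, by omega⟩
  rw [hk2] at hklt ⊢
  have hxm : a ≠ (a :: t).getD (k' + 1) 0 := by
    rw [List.getD_eq_getElem _ _ hklt]
    intro hcon
    have h0 : (a :: t)[0] = (a :: t)[k' + 1] := hcon
    have := (hl.getElem_inj_iff).mp h0
    omega
  have hmemtake : a ∈ (a :: t).take (k' + 1) := by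
    rw [List.take_succ_cons]; exact List.mem_cons_self
  have hnotdrop : a ∉ (a :: t).drop (k' + 1 + 1) := by
    intro hmem
    have hsplit := List.take_append_drop (k' + 1 + 1) (a :: t)
    rw [← hsplit] at hl
    rw [List.nodup_append'] at hl
    refine hl.2.2 ?_ hmem
    rw [List.take_succ_cons]
    exact List.mem_cons_self
  have hhead : ((a :: t).take (k' + 1)).headI = a := by
    rw [List.take_succ_cons]; rfl
  unfold F
  rw [min12Tree_eq hne, hk2, hhead]
  rw [show (a :: t).headI = a from rfl]
  exact isLeaf_node_left hxm (memB_min12Tree.mpr hmemtake) (memB_min12Tree_false hnotdrop)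

theorem not_F_of_pivot_zero {l : List ℕ} (hne : l ≠ [])
    (hk : l.findIdx (isMin12 l) = 0) (h2 : 2 ≤ l.length) : ¬ F l :=
  not_F_of_pivot_zero' hne hk h2

theorem F_iff_of_sat {a b c : ℕ} {w : List ℕ} (hnd : (a :: b :: c :: w).Nodup)
    (hsat : isMin12 (a :: b :: c :: w) a = true ∨ isMin12 (a :: b :: c :: w) b = true ∨
      isMin12 (a :: b :: c :: w) c = true) :
    F (a :: b :: c :: w) ↔ (isMin12 (a :: b :: c :: w) a = false ∧
      isMin12 (a :: b :: c :: w) b = true) := by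
  set l := a :: b :: c :: w with hldef
  have hne : l ≠ [] := by simp [hldef]
  have h2 : 2 ≤ l.length := by simp [hldef]
  have hab : a ≠ b := by
    intro h; subst h; simp [hldef] at hnd
  cases hPa : isMin12 l a with
  | true =>
    have hk : l.findIdx (isMin12 l) = 0 := by
      rw [hldef, List.findIdx_cons]
      simp only [← hldef, hPa, cond_true]
    simp only [hPa, Bool.true_eq_false, false_and, iff_false]
    exact not_F_of_pivot_zero' hne hk h2
  | false =>
    cases hPb : isMin12 l b with
    | true =>
      have hk : l.findIdx (isMin12 l) = 1 := by
        rw [hldef, List.findIdx_cons, List.findIdx_cons]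
        simp only [← hldef, hPa, hPb, cond_true, cond_false]
      simp only [hPb, and_true, hPa, iff_true]
      have := F_of_pivot_pos hnd hne (by omega)
      rw [hk] at this
      rw [this]
      exact F_singleton a
    | false =>
      simp only [hPb, Bool.false_eq_true, and_false, iff_false]
      cases hPc : isMin12 l c with
      | true =>
        have hk : l.findIdx (isMin12 l) = 2 := by
          rw [hldef, List.findIdx_cons, List.findIdx_cons, List.findIdx_cons]
          simp only [← hldef, hPa, hPb, hPc, cond_true, cond_false]
        have := F_of_pivot_pos hnd hne (by omega)
        rw [hk] at this
        rw [this]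
        exact not_F_pair hab
      | false =>
        rw [hPa, hPb, hPc] at hsat
        simp at hsat

theorem F_iff_of_no_sat {a b c : ℕ} {w : List ℕ} (hnd : (a :: b :: c :: w).Nodup)
    (hPa : isMin12 (a :: b :: c :: w) a = false) (hPb : isMin12 (a :: b :: c :: w) b = false)
    (hPc : isMin12 (a :: b :: c :: w) c = false) :
    F (a :: b :: c :: w) ↔
      F (a :: b :: c :: (w.take (w.findIdx (isMin12 (a :: b :: c :: w))))) := by
  set l := a :: b :: c :: w with hldef
  have hne : l ≠ [] := by simp [hldef]
  have hk : l.findIdx (isMin12 l) = w.findIdx (isMin12 l) + 3 := by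
    rw [hldef, List.findIdx_cons, List.findIdx_cons, List.findIdx_cons]
    simp only [← hldef, hPa, hPb, hPc, cond_false]
  have := F_of_pivot_pos hnd hne (by omega)
  rw [hk] at this
  rw [this]
  rw [show l.take (w.findIdx (isMin12 l) + 3) =
    a :: b :: c :: (w.take (w.findIdx (isMin12 l))) from by
      rw [hldef, List.take_succ_cons, List.take_succ_cons, List.take_succ_cons]]

theorem exactly_one_aux {F1 F2 F3 : Prop} {Pa Pb Pc : Bool}
    (A1 : F1 ↔ (Pa = false ∧ Pb = true)) (A2 : F2 ↔ (Pb = false ∧ Pc = true))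
    (A3 : F3 ↔ (Pc = false ∧ Pa = true))
    (hsat : Pa = true ∨ Pb = true ∨ Pc = true)
    (hno3 : ¬(Pa = true ∧ Pb = true ∧ Pc = true)) :
    (F1 ∧ ¬F2 ∧ ¬F3) ∨ (¬F1 ∧ F2 ∧ ¬F3) ∨ (¬F1 ∧ ¬F2 ∧ F3) := by
  rw [A1, A2, A3]
  cases Pa <;> cases Pb <;> cases Pc <;> simp_all

/-- One step of the rotation argument, with recursion handled by a hypothesis. -/
theorem rotation_step (w : List ℕ) (a b c : ℕ) (hnd : (a :: b :: c :: w).Nodup)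
    (rec : ∀ (w' : List ℕ) (a' b' c' : ℕ), w'.length < w.length →
      (a' :: b' :: c' :: w').Nodup →
      (F (a' :: b' :: c' :: w') ∧ ¬ F (b' :: c' :: a' :: w') ∧ ¬ F (c' :: a' :: b' :: w')) ∨
      (¬ F (a' :: b' :: c' :: w') ∧ F (b' :: c' :: a' :: w') ∧ ¬ F (c' :: a' :: b' :: w')) ∨
      (¬ F (a' :: b' :: c' :: w') ∧ ¬ F (b' :: c' :: a' :: w') ∧ F (c' :: a' :: b' :: w'))) :
    (F (a :: b :: c :: w) ∧ ¬ F (b :: c :: a :: w) ∧ ¬ F (c :: a :: b :: w)) ∨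
    (¬ F (a :: b :: c :: w) ∧ F (b :: c :: a :: w) ∧ ¬ F (c :: a :: b :: w)) ∨
    (¬ F (a :: b :: c :: w) ∧ ¬ F (b :: c :: a :: w) ∧ F (c :: a :: b :: w)) := by
  have hnd1 : (a :: b :: c :: w).Nodup := hnd
  have h12 : (a :: b :: c :: w).Perm (b :: c :: a :: w) := by
    calc a :: b :: c :: w ~ b :: a :: c :: w := List.Perm.swap b a _
      _ ~ b :: c :: a :: w := List.Perm.cons b (List.Perm.swap c a _)
  have h13 : (a :: b :: c :: w).Perm (c :: a :: b :: w) := by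
    calc a :: b :: c :: w ~ a :: c :: b :: w := List.Perm.cons a (List.Perm.swap c b _)
      _ ~ c :: a :: b :: w := List.Perm.swap c a _
  have hnd2 := hnd1.perm h12
  have hnd3 := hnd1.perm h13
  have e2 : ∀ x, isMin12 (b :: c :: a :: w) x = isMin12 (a :: b :: c :: w) x :=
    fun x => (isMin12_perm h12 hnd1 x).symm
  have e3 : ∀ x, isMin12 (c :: a :: b :: w) x = isMin12 (a :: b :: c :: w) x :=
    fun x => (isMin12_perm h13 hnd1 x).symm
  have hab : a ≠ b := by intro h; subst h; simp at hnd1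
  have hbc : b ≠ c := by intro h; subst h; simp at hnd1
  have hac : a ≠ c := by intro h; subst h; simp at hnd1
  have hal : a ∈ (a :: b :: c :: w) := by simp
  have hbl : b ∈ (a :: b :: c :: w) := by simp
  have hcl : c ∈ (a :: b :: c :: w) := by simp
  by_cases hsat : isMin12 (a :: b :: c :: w) a = true ∨ isMin12 (a :: b :: c :: w) b = true ∨
      isMin12 (a :: b :: c :: w) c = true
  · have A1 := F_iff_of_sat hnd1 hsat
    have A2 := F_iff_of_sat hnd2 (by rw [e2 b, e2 c, e2 a]; tauto)
    have A3 := F_iff_of_sat hnd3 (by rw [e3 c, e3 a, e3 b]; tauto)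
    rw [e2 b, e2 c] at A2
    rw [e3 c, e3 a] at A3
    have hno3 : ¬(isMin12 (a :: b :: c :: w) a = true ∧ isMin12 (a :: b :: c :: w) b = true ∧
        isMin12 (a :: b :: c :: w) c = true) := by
      rintro ⟨ha', hb', hc'⟩
      exact not_three_isMin12 hnd1 hal hbl hcl hab hbc hac ha' hb' hc'
    exact exactly_one_aux A1 A2 A3 hsat hno3
  · push_neg at hsat
    obtain ⟨ha', hb', hc'⟩ := hsat
    have hPa : isMin12 (a :: b :: c :: w) a = false := by
      cases h : isMin12 (a :: b :: c :: w) a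
      · rfl
      · exact absurd h ha'
    have hPb : isMin12 (a :: b :: c :: w) b = false := by
      cases h : isMin12 (a :: b :: c :: w) b
      · rfl
      · exact absurd h hb'
    have hPc : isMin12 (a :: b :: c :: w) c = false := by
      cases h : isMin12 (a :: b :: c :: w) c
      · rfl
      · exact absurd h hc'
    have B1 := F_iff_of_no_sat hnd1 hPa hPb hPc
    have B2 := F_iff_of_no_sat hnd2 ((e2 b).trans hPb) ((e2 c).trans hPc) ((e2 a).trans hPa)
    have B3 := F_iff_of_no_sat hnd3 ((e3 c).trans hPc) ((e3 a).trans hPa) ((e3 b).trans hPb)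
    have hfun2 : isMin12 (b :: c :: a :: w) = isMin12 (a :: b :: c :: w) := funext e2
    have hfun3 : isMin12 (c :: a :: b :: w) = isMin12 (a :: b :: c :: w) := funext e3
    rw [hfun2] at B2
    rw [hfun3] at B3
    have hj : w.findIdx (isMin12 (a :: b :: c :: w)) < w.length := by
      have hklt := pivot_lt_length (show (a :: b :: c :: w) ≠ [] by simp)
      have hk : (a :: b :: c :: w).findIdx (isMin12 (a :: b :: c :: w)) =
          w.findIdx (isMin12 (a :: b :: c :: w)) + 3 := by
        rw [List.findIdx_cons, List.findIdx_cons, List.findIdx_cons]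
        simp only [hPa, hPb, hPc, cond_false]
      rw [hk] at hklt
      simp only [List.length_cons] at hklt
      omega
    have hlen : (w.take (w.findIdx (isMin12 (a :: b :: c :: w)))).length < w.length := by
      rw [List.length_take]; omega
    have hnd' : (a :: b :: c :: (w.take (w.findIdx (isMin12 (a :: b :: c :: w))))).Nodup := by
      refine List.Nodup.sublist ?_ hnd1
      exact List.Sublist.cons₂ _ (List.Sublist.cons₂ _ (List.Sublist.cons₂ _
        (List.take_sublist _ _)))
    have hrec := rec _ a b c hlen hnd'
    rw [B1, B2, B3]
    exact hrec

/-- Exactly one of the three rotations has its first entry a leaf. -/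
theorem rotation_lemma (N : ℕ) : ∀ (w : List ℕ) (a b c : ℕ), w.length ≤ N →
    (a :: b :: c :: w).Nodup →
    (F (a :: b :: c :: w) ∧ ¬ F (b :: c :: a :: w) ∧ ¬ F (c :: a :: b :: w)) ∨
    (¬ F (a :: b :: c :: w) ∧ F (b :: c :: a :: w) ∧ ¬ F (c :: a :: b :: w)) ∨
    (¬ F (a :: b :: c :: w) ∧ ¬ F (b :: c :: a :: w) ∧ F (c :: a :: b :: w)) := by
  induction N with
  | zero =>
    intro w a b c hw hnd
    exact rotation_step w a b c hnd (fun w' a' b' c' hlt hnd' => absurd hlt (by omega))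
  | succ N ih =>
    intro w a b c hw hnd
    refine rotation_step w a b c hnd (fun w' a' b' c' hlt hnd' => ?_)
    exact ih w' a' b' c' (by omega) hnd' 

end Min12Proof

open Min12Proof

/-- For `n ≥ 3` and `1 ≤ i ≤ n − 2`, the number of permutations `p`
of `{1,…,n}` such that the entry `p_i` is a leaf of the min1–min2 tree of `p` is
exactly `n!/3`. -/
theorem min12_entry_leaf_count (n : ℕ) (hn : 3 ≤ n) (i : ℕ) (hi1 : 1 ≤ i)
    (hi2 : i ≤ n - 2) :
    (Finset.univ.filter (fun p : Equiv.Perm (Fin n) =>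
        (min12Tree (permList n p)).IsLeaf (entryAt n p i))).card = n.factorial / 3 := by
  have hi0 : i - 1 < n := by omega
  have hi1 : i < n := by omega
  have hi2' : i + 1 < n := by omega
  set i0 : Fin n := ⟨i - 1, hi0⟩ with hi0def
  set i1 : Fin n := ⟨i, hi1⟩ with hi1def
  set i2 : Fin n := ⟨i + 1, hi2'⟩ with hi2def
  have h01 : i0 ≠ i1 := by rw [hi0def, hi1def]; simp only [ne_eq, Fin.mk.injEq]; omega
  have h02 : i0 ≠ i2 := by rw [hi0def, hi2def]; simp only [ne_eq, Fin.mk.injEq]; omega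
  have h12 : i1 ≠ i2 := by rw [hi1def, hi2def]; simp only [ne_eq, Fin.mk.injEq]; omega
  set c : Equiv.Perm (Fin n) := Equiv.swap i0 i1 * Equiv.swap i1 i2 with hcdef
  have hc0 : c i0 = i1 := by
    rw [hcdef, Equiv.Perm.mul_apply, Equiv.swap_apply_of_ne_of_ne h01 h02,
      Equiv.swap_apply_left]
  have hc1 : c i1 = i2 := by
    rw [hcdef, Equiv.Perm.mul_apply, Equiv.swap_apply_left,
      Equiv.swap_apply_of_ne_of_ne (Ne.symm h02) (Ne.symm h12)]
  have hc2 : c i2 = i0 := by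
    rw [hcdef, Equiv.Perm.mul_apply, Equiv.swap_apply_right, Equiv.swap_apply_right]
  have hcfix : ∀ j : Fin n, i + 2 ≤ (j : ℕ) → c j = j := by
    intro j hj
    have hj1 : j ≠ i1 := by rw [hi1def]; simp only [ne_eq, Fin.ext_iff]; omega
    have hj2 : j ≠ i2 := by rw [hi2def]; simp only [ne_eq, Fin.ext_iff]; omega
    have hj0 : j ≠ i0 := by rw [hi0def]; simp only [ne_eq, Fin.ext_iff]; omega
    rw [hcdef, Equiv.Perm.mul_apply, Equiv.swap_apply_of_ne_of_ne hj1 hj2,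
      Equiv.swap_apply_of_ne_of_ne hj0 hj1]
  have hplen : ∀ q : Equiv.Perm (Fin n), (permList n q).length = n := by
    intro q; simp [permList]
  have hpnodup : ∀ q : Equiv.Perm (Fin n), (permList n q).Nodup := by
    intro q
    apply List.nodup_ofFn.mpr
    intro s t hst
    exact q.injective (Fin.ext (by simpa using hst))
  have hgetElem : ∀ (q : Equiv.Perm (Fin n)) (j : ℕ) (hj : j < n),
      (permList n q)[j]'(by rw [hplen]; exact hj) = (q ⟨j, hj⟩ : ℕ) + 1 := by
    intro q j hj
    exact List.getElem_ofFn _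
  have hdecomp : ∀ q : Equiv.Perm (Fin n), (permList n q).drop (i - 1) =
      ((q i0 : ℕ) + 1) :: ((q i1 : ℕ) + 1) :: ((q i2 : ℕ) + 1) ::
        (permList n q).drop (i + 2) := by
    intro q
    have e0 : i - 1 < (permList n q).length := by rw [hplen]; omega
    have e1 : i < (permList n q).length := by rw [hplen]; omega
    have e2 : i + 1 < (permList n q).length := by rw [hplen]; omega
    rw [List.drop_eq_getElem_cons e0, show i - 1 + 1 = i from by omega,
      List.drop_eq_getElem_cons e1, List.drop_eq_getElem_cons e2,
      show i + 1 + 1 = i + 2 from by omega]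
    rw [hgetElem q (i - 1) hi0, hgetElem q i hi1, hgetElem q (i + 1) hi2']
  have htail : ∀ q r : Equiv.Perm (Fin n), (∀ j : Fin n, i + 2 ≤ (j : ℕ) → q j = r j) →
      (permList n q).drop (i + 2) = (permList n r).drop (i + 2) := by
    intro q r hqr
    apply List.ext_getElem
    · rw [List.length_drop, List.length_drop, hplen, hplen]
    · intro j hj1 hj2
      rw [List.length_drop, hplen] at hj1
      rw [List.getElem_drop, List.getElem_drop]
      rw [hgetElem q (i + 2 + j) (by omega), hgetElem r (i + 2 + j) (by omega)]
      rw [hqr ⟨i + 2 + j, by omega⟩ (by simp)]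
  have hiff : ∀ q : Equiv.Perm (Fin n),
      ((min12Tree (permList n q)).IsLeaf (entryAt n q i) ↔
        F ((permList n q).drop (i - 1))) := by
    intro q
    have hw : (permList n q).drop (i - 1) ≠ [] := by rw [hdecomp q]; simp
    have hhead : ((permList n q).drop (i - 1)).headI = entryAt n q i := by
      rw [hdecomp q]
      show (q i0 : ℕ) + 1 = entryAt n q i
      rw [entryAt, List.getD_eq_getElem _ _ (by rw [hplen]; omega)]
      rw [hgetElem q (i - 1) hi0]
    have h1 := leaf_head_append (u := (permList n q).take (i - 1))
      (w := (permList n q).drop (i - 1))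
      (by rw [List.take_append_drop]; exact hpnodup q) hw
    rw [List.take_append_drop] at h1
    rw [hhead] at h1
    simp only [F]
    rw [hhead]
    exact h1
  have hkey : ∀ p : Equiv.Perm (Fin n),
      ((min12Tree (permList n p)).IsLeaf (entryAt n p i) ∧
        ¬ (min12Tree (permList n (p * c))).IsLeaf (entryAt n (p * c) i) ∧
        ¬ (min12Tree (permList n (p * c * c))).IsLeaf (entryAt n (p * c * c) i)) ∨
      (¬ (min12Tree (permList n p)).IsLeaf (entryAt n p i) ∧
        (min12Tree (permList n (p * c))).IsLeaf (entryAt n (p * c) i) ∧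
        ¬ (min12Tree (permList n (p * c * c))).IsLeaf (entryAt n (p * c * c) i)) ∨
      (¬ (min12Tree (permList n p)).IsLeaf (entryAt n p i) ∧
        ¬ (min12Tree (permList n (p * c))).IsLeaf (entryAt n (p * c) i) ∧
        (min12Tree (permList n (p * c * c))).IsLeaf (entryAt n (p * c * c) i)) := by
    intro p
    have hd1 := hdecomp p
    have hd2 := hdecomp (p * c)
    have hd3 := hdecomp (p * c * c)
    rw [show (p * c) i0 = p i1 from by rw [Equiv.Perm.mul_apply, hc0],
        show (p * c) i1 = p i2 from by rw [Equiv.Perm.mul_apply, hc1],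
        show (p * c) i2 = p i0 from by rw [Equiv.Perm.mul_apply, hc2],
        htail (p * c) p (fun j hj => by rw [Equiv.Perm.mul_apply, hcfix j hj])] at hd2
    rw [show (p * c * c) i0 = p i2 from by
          rw [Equiv.Perm.mul_apply, Equiv.Perm.mul_apply, hc0, hc1],
        show (p * c * c) i1 = p i0 from by
          rw [Equiv.Perm.mul_apply, Equiv.Perm.mul_apply, hc1, hc2],
        show (p * c * c) i2 = p i1 from by
          rw [Equiv.Perm.mul_apply, Equiv.Perm.mul_apply, hc2, hc0],
        htail (p * c * c) p (fun j hj => by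
          rw [Equiv.Perm.mul_apply, Equiv.Perm.mul_apply, hcfix j hj, hcfix j hj])] at hd3
    have hnd1 : (((p i0 : ℕ) + 1) :: ((p i1 : ℕ) + 1) :: ((p i2 : ℕ) + 1) ::
        (permList n p).drop (i + 2)).Nodup := by
      rw [← hd1]
      exact List.Nodup.sublist (List.drop_sublist _ _) (hpnodup p)
    have hrot := rotation_lemma ((permList n p).drop (i + 2)).length
      ((permList n p).drop (i + 2)) ((p i0 : ℕ) + 1) ((p i1 : ℕ) + 1) ((p i2 : ℕ) + 1)
      (le_refl _) hnd1
    rw [hiff p, hiff (p * c), hiff (p * c * c), hd1, hd2, hd3]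
    exact hrot
  have key : ∀ p : Equiv.Perm (Fin n),
      ((if (min12Tree (permList n p)).IsLeaf (entryAt n p i) then (1 : ℕ) else 0) +
       (if (min12Tree (permList n (p * c))).IsLeaf (entryAt n (p * c) i) then (1 : ℕ) else 0) +
       (if (min12Tree (permList n (p * c * c))).IsLeaf (entryAt n (p * c * c) i)
          then (1 : ℕ) else 0)) = 1 := by
    intro p
    rcases hkey p with ⟨h1, h2, h3⟩ | ⟨h1, h2, h3⟩ | ⟨h1, h2, h3⟩ <;> simp [h1, h2, h3]
  have htot : ∑ p : Equiv.Perm (Fin n),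
      ((if (min12Tree (permList n p)).IsLeaf (entryAt n p i) then (1 : ℕ) else 0) +
       (if (min12Tree (permList n (p * c))).IsLeaf (entryAt n (p * c) i) then (1 : ℕ) else 0) +
       (if (min12Tree (permList n (p * c * c))).IsLeaf (entryAt n (p * c * c) i)
          then (1 : ℕ) else 0)) = n.factorial := by
    rw [Finset.sum_congr rfl (fun p _ => key p)]
    simp [Finset.card_univ, Fintype.card_perm, Fintype.card_fin]
  rw [Finset.sum_add_distrib, Finset.sum_add_distrib] at htot
  have e2 : ∑ p : Equiv.Perm (Fin n),
      (if (min12Tree (permList n (p * c))).IsLeaf (entryAt n (p * c) i) then (1 : ℕ) else 0) =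
      ∑ p : Equiv.Perm (Fin n),
      (if (min12Tree (permList n p)).IsLeaf (entryAt n p i) then (1 : ℕ) else 0) :=
    Fintype.sum_equiv (Equiv.mulRight c) _ _ (fun p => rfl)
  have e3 : ∑ p : Equiv.Perm (Fin n),
      (if (min12Tree (permList n (p * c * c))).IsLeaf (entryAt n (p * c * c) i)
        then (1 : ℕ) else 0) =
      ∑ p : Equiv.Perm (Fin n),
      (if (min12Tree (permList n p)).IsLeaf (entryAt n p i) then (1 : ℕ) else 0) := by
    have := Fintype.sum_equiv (Equiv.mulRight (c * c))
      (fun p : Equiv.Perm (Fin n) =>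
        (if (min12Tree (permList n (p * (c * c)))).IsLeaf (entryAt n (p * (c * c)) i)
          then (1 : ℕ) else 0))
      (fun p : Equiv.Perm (Fin n) =>
        (if (min12Tree (permList n p)).IsLeaf (entryAt n p i) then (1 : ℕ) else 0))
      (fun p => rfl)
    rw [← this]
    apply Finset.sum_congr rfl
    intro p _
    rw [mul_assoc]
  rw [e2, e3] at htot
  have hfil : (Finset.univ.filter (fun p : Equiv.Perm (Fin n) =>
      (min12Tree (permList n p)).IsLeaf (entryAt n p i))).card =
      ∑ p : Equiv.Perm (Fin n),
      (if (min12Tree (permList n p)).IsLeaf (entryAt n p i) then (1 : ℕ) else 0) :=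
    Finset.card_filter _ _
  rw [hfil]
  omega
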